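/- arXiv:0909.5322 — 4 statements merged into one kernel-verified Lean document; each statement's English description precedes it below -/
import Mathlib

section
/- Let (p, ω) be a symplectic vector space and A₁, A₂ ∈ sp(p, ω). Define R_{A₁∧A₂}(x,y) := (1/2)((A₁x) ∘ (A₂y) − (A₁y) ∘ (A₂x)), where (u ∘ v)(z) := ω(u,z)v + ω(v,z)u. Then R_{A₁∧A₂} satisfies the first Bianchi identity: R_{A₁∧A₂}(x,y)z + R_{A₁∧A₂}(y,z)x + R_{A₁∧A₂}(z,x)y = 0 for all x, y, z ∈ p. -/
/-- For `A₁, A₂ ∈ sp(p,ω)`, the map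
`R_{A₁∧A₂}(x,y) := ½((A₁x) ∘ (A₂y) − (A₁y) ∘ (A₂x))`, where
`(u ∘ v)(z) = ω(u,z)v + ω(v,z)u`, satisfies the first Bianchi identity. -/
theorem stmt3
    {p : Type*} [AddCommGroup p] [Module ℝ p] [FiniteDimensional ℝ p]
    (ω : p →ₗ[ℝ] p →ₗ[ℝ] ℝ)
    (hωalt : ∀ v, ω v v = 0)
    (hωnd : ∀ v, (∀ w, ω v w = 0) → v = 0)
    (A₁ A₂ : Module.End ℝ p)
    (hA₁ : ∀ u v, ω (A₁ u) v + ω u (A₁ v) = 0)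
    (hA₂ : ∀ u v, ω (A₂ u) v + ω u (A₂ v) = 0)
    (Rm : p → p → p → p)
    (hRm : ∀ x y z, Rm x y z =
      (1/2 : ℝ) • ((ω (A₁ x) z • A₂ y + ω (A₂ y) z • A₁ x)
                 - (ω (A₁ y) z • A₂ x + ω (A₂ x) z • A₁ y))) :
    ∀ x y z, Rm x y z + Rm y z x + Rm z x y = 0 := by
  have skew : ∀ u v, ω u v = -ω v u := by
    intro u v
    have h := hωalt (u + v)
    simp only [map_add, LinearMap.add_apply, hωalt u, hωalt v] at h
    linarith
  have h1 : ∀ u v, ω (A₁ u) v = ω (A₁ v) u := by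
    intro u v
    have := hA₁ u v
    have := skew u (A₁ v)
    linarith
  have h2 : ∀ u v, ω (A₂ u) v = ω (A₂ v) u := by
    intro u v
    have := hA₂ u v
    have := skew u (A₂ v)
    linarith
  intro x y z
  simp only [hRm]
  rw [h1 y x, h2 y x, h1 z x, h2 z x, h1 z y, h2 z y]
  match_scalars <;> ring
end

section
/- With the setup of an extrinsic symplectic morphism di = Λ + τ: g → asp(V,Ω) and the map 𝒜: W₂ → sp(p,ω) defined by τ(𝒜(ξ)x) = Λ(x)ξ, the map 𝒜 is k-equivariant: for all k ∈ k and ξ ∈ W₂, 𝒜(Λ(k)ξ) = [ad_k|_p, 𝒜(ξ)], where ad_k|_p denotes the action of k on p (equivalently [k, 𝒜(ξ)] using the representation of k on p via the bracket). -/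
/-- The map `𝒜 : W₂ → sp(p,ω)`, defined by `τ(𝒜(ξ)x) = Λ(x)ξ`, is
`k`-equivariant: `𝒜(Λ(k)ξ) = [ad_k|_p, 𝒜(ξ)]` for `k ∈ k`, `ξ ∈ W₂`.  Here `aξ` and
`aξ'` represent the endomorphisms `𝒜(ξ)` and `𝒜(Λ(kk)ξ)` of `p` via their defining
property, and `[ad_kk, 𝒜(ξ)](x) = ⁅kk, aξ x⁆ − aξ ⁅kk, x⁆`. -/
theorem stmt10
    {g : Type*} [LieRing g] [LieAlgebra ℝ g]
    (k p : Submodule ℝ g)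
    (hcompl : IsCompl k p)
    (hkk : ∀ x ∈ k, ∀ y ∈ k, ⁅x, y⁆ ∈ k)
    (hkp : ∀ x ∈ k, ∀ y ∈ p, ⁅x, y⁆ ∈ p)
    (hpp : ∀ x ∈ p, ∀ y ∈ p, ⁅x, y⁆ ∈ k)
    {V : Type*} [AddCommGroup V] [Module ℝ V] [FiniteDimensional ℝ V]
    (Ω : V →ₗ[ℝ] V →ₗ[ℝ] ℝ)
    (hΩalt : ∀ v, Ω v v = 0)
    (hΩnd : ∀ v, (∀ w, Ω v w = 0) → v = 0)
    (Λ : g →ₗ[ℝ] Module.End ℝ V) (τ : g →ₗ[ℝ] V)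
    (hskew : ∀ z u v, Ω (Λ z u) v + Ω u (Λ z v) = 0)
    (hhomΛ : ∀ x y, Λ ⁅x, y⁆ = ⁅Λ x, Λ y⁆)
    (hhomτ : ∀ x y, τ ⁅x, y⁆ = Λ x (τ y) - Λ y (τ x))
    (W₁ W₂ : Submodule ℝ V)
    (hVcompl : IsCompl W₁ W₂)
    (horth : ∀ x ∈ W₁, ∀ y ∈ W₂, Ω x y = 0)
    (hker : LinearMap.ker τ = k)
    (hτp : Submodule.map τ p = W₁)
    (hΛk : ∀ z ∈ k, (∀ w ∈ W₁, Λ z w ∈ W₁) ∧ (∀ w ∈ W₂, Λ z w ∈ W₂))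
    (hΛp : ∀ z ∈ p, (∀ w ∈ W₁, Λ z w ∈ W₂) ∧ (∀ w ∈ W₂, Λ z w ∈ W₁))
    (kk : g) (hkkk : kk ∈ k) (ξ : V) (hξ : ξ ∈ W₂)
    (aξ : g → g)
    (haξ : ∀ x ∈ p, aξ x ∈ p ∧ τ (aξ x) = Λ x ξ)
    (aξ' : g → g)
    (haξ' : ∀ x ∈ p, aξ' x ∈ p ∧ τ (aξ' x) = Λ x (Λ kk ξ)) :
    ∀ x ∈ p, aξ' x = ⁅kk, aξ x⁆ - aξ ⁅kk, x⁆ := by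
  intro x hx
  have hτkk : τ kk = 0 := by
    have : kk ∈ LinearMap.ker τ := hker ▸ hkkk
    exact LinearMap.mem_ker.mp this
  obtain ⟨hax, htax⟩ := haξ x hx
  have hbx : ⁅kk, x⁆ ∈ p := hkp kk hkkk x hx
  obtain ⟨hax2, htax2⟩ := haξ ⁅kk, x⁆ hbx
  obtain ⟨ha'x, hta'x⟩ := haξ' x hx
  have hmem : ⁅kk, aξ x⁆ - aξ ⁅kk, x⁆ ∈ p :=
    sub_mem (hkp kk hkkk _ hax) hax2
  have hτeq : τ (aξ' x) = τ (⁅kk, aξ x⁆ - aξ ⁅kk, x⁆) := by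
    rw [map_sub, hhomτ, hτkk, map_zero, sub_zero, htax, htax2, hhomΛ, hta'x]
    simp only [Ring.lie_def, LinearMap.sub_apply, Module.End.mul_apply]
    abel
  have hdiff : aξ' x - (⁅kk, aξ x⁆ - aξ ⁅kk, x⁆) ∈ k := by
    rw [← hker, LinearMap.mem_ker, map_sub, hτeq, sub_self]
  have hdiffp : aξ' x - (⁅kk, aξ x⁆ - aξ ⁅kk, x⁆) ∈ p := sub_mem ha'x hmem
  have h0 : aξ' x - (⁅kk, aξ x⁆ - aξ ⁅kk, x⁆) = 0 :=
    (Submodule.disjoint_def.mp hcompl.disjoint) _ hdiff hdiffp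
  exact sub_eq_zero.mp h0
end

section
/- Let di = Λ + τ: g → asp(V,Ω) be an extrinsic symplectic morphism with splitting V = W₁ ⊕ W₂. Then the subspace W₁ ⊕ W₂', where W₂' := span{Λ(x)τ(y) : x, y ∈ p}, is invariant under Λ(z) for every z ∈ g, and contains τ(g). Consequently, di(g) ⊆ stab(W₁ ⊕ W₂') := {A + v ∈ asp(V,Ω) : v ∈ W₁ ⊕ W₂', A(W₁ ⊕ W₂') ⊆ W₁ ⊕ W₂'}. -/
/-- With `W₂' := span{Λ(x)τ(y) : x, y ∈ p}`, the subspace `W₁ ⊕ W₂'`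
is invariant under `Λ(z)` for every `z ∈ g` and contains `τ(g)`; hence
`di(g) ⊆ stab(W₁ ⊕ W₂')`. -/
theorem stmt12
    {g : Type*} [LieRing g] [LieAlgebra ℝ g]
    (k p : Submodule ℝ g)
    (hcompl : IsCompl k p)
    (hkk : ∀ x ∈ k, ∀ y ∈ k, ⁅x, y⁆ ∈ k)
    (hkp : ∀ x ∈ k, ∀ y ∈ p, ⁅x, y⁆ ∈ p)
    (hpp : ∀ x ∈ p, ∀ y ∈ p, ⁅x, y⁆ ∈ k)
    {V : Type*} [AddCommGroup V] [Module ℝ V] [FiniteDimensional ℝ V]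
    (Ω : V →ₗ[ℝ] V →ₗ[ℝ] ℝ)
    (hΩalt : ∀ v, Ω v v = 0)
    (hΩnd : ∀ v, (∀ w, Ω v w = 0) → v = 0)
    (Λ : g →ₗ[ℝ] Module.End ℝ V) (τ : g →ₗ[ℝ] V)
    (hskew : ∀ z u v, Ω (Λ z u) v + Ω u (Λ z v) = 0)
    (hhomΛ : ∀ x y, Λ ⁅x, y⁆ = ⁅Λ x, Λ y⁆)
    (hhomτ : ∀ x y, τ ⁅x, y⁆ = Λ x (τ y) - Λ y (τ x))
    (W₁ W₂ : Submodule ℝ V)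
    (hVcompl : IsCompl W₁ W₂)
    (horth : ∀ x ∈ W₁, ∀ y ∈ W₂, Ω x y = 0)
    (hker : LinearMap.ker τ = k)
    (hτp : Submodule.map τ p = W₁)
    (hΛk : ∀ z ∈ k, (∀ w ∈ W₁, Λ z w ∈ W₁) ∧ (∀ w ∈ W₂, Λ z w ∈ W₂))
    (hΛp : ∀ z ∈ p, (∀ w ∈ W₁, Λ z w ∈ W₂) ∧ (∀ w ∈ W₂, Λ z w ∈ W₁)) :
    (∀ z : g, ∀ v ∈ W₁ ⊔ Submodule.span ℝ {v : V | ∃ x ∈ p, ∃ y ∈ p, v = Λ x (τ y)},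
        Λ z v ∈ W₁ ⊔ Submodule.span ℝ {v : V | ∃ x ∈ p, ∃ y ∈ p, v = Λ x (τ y)}) ∧
    (∀ z : g, τ z ∈ W₁ ⊔ Submodule.span ℝ {v : V | ∃ x ∈ p, ∃ y ∈ p, v = Λ x (τ y)}) := by

  set T : Set V := {v : V | ∃ x ∈ p, ∃ y ∈ p, v = Λ x (τ y)} with hT
  set S : Submodule ℝ V := W₁ ⊔ Submodule.span ℝ T with hS
  have hW₁S : W₁ ≤ S := le_sup_left
  have hTS : ∀ v ∈ T, v ∈ S := fun v hv =>
    le_sup_right (α := Submodule ℝ V) (Submodule.subset_span hv)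
  have hτk : ∀ z ∈ k, τ z = 0 := by
    intro z hz
    rw [← hker] at hz
    exact hz
  have keyk : ∀ z ∈ k, ∀ v ∈ S, Λ z v ∈ S := by
    intro z hz v hv
    have hspan : ∀ s ∈ Submodule.span ℝ T, Λ z s ∈ S := by
      intro s hs
      induction hs using Submodule.span_induction with
      | mem u hu =>
        rcases hu with ⟨x, hx, y, hy, rfl⟩
        have h1 : Λ z (Λ x (τ y)) = Λ ⁅z, x⁆ (τ y) + Λ x (Λ z (τ y)) := by
          have h2 : Λ ⁅z, x⁆ (τ y) = Λ z (Λ x (τ y)) - Λ x (Λ z (τ y)) := by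
            rw [hhomΛ z x]; rfl
          rw [h2]; abel
        rw [h1]
        have hΛzτy : Λ z (τ y) = τ ⁅z, y⁆ := by
          rw [hhomτ z y, hτk z hz]; simp
        refine Submodule.add_mem _ (hTS _ ⟨⁅z, x⁆, hkp z hz x hx, y, hy, rfl⟩) ?_
        rw [hΛzτy]
        exact hTS _ ⟨x, hx, ⁅z, y⁆, hkp z hz y hy, rfl⟩
      | zero => simp
      | add u v hu hv ihu ihv => rw [map_add]; exact Submodule.add_mem _ ihu ihv
      | smul c u hu ihu => rw [map_smul]; exact Submodule.smul_mem _ c ihu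
    rcases Submodule.mem_sup.mp hv with ⟨w, hw, s, hs, rfl⟩
    rw [map_add]
    exact Submodule.add_mem _ (hW₁S ((hΛk z hz).1 w hw)) (hspan s hs)
  have keyp : ∀ z ∈ p, ∀ v ∈ S, Λ z v ∈ S := by
    intro z hz v hv
    have hspan : ∀ s ∈ Submodule.span ℝ T, Λ z s ∈ S := by
      intro s hs
      induction hs using Submodule.span_induction with
      | mem u hu =>
        rcases hu with ⟨x, hx, y, hy, rfl⟩
        have h1 : Λ z (Λ x (τ y)) = Λ ⁅z, x⁆ (τ y) + Λ x (Λ z (τ y)) := by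
          have h2 : Λ ⁅z, x⁆ (τ y) = Λ z (Λ x (τ y)) - Λ x (Λ z (τ y)) := by
            rw [hhomΛ z x]; rfl
          rw [h2]; abel
        rw [h1]
        have hτy : τ y ∈ W₁ := hτp ▸ ⟨y, hy, rfl⟩
        refine Submodule.add_mem _ (hW₁S ((hΛk _ (hpp z hz x hx)).1 _ hτy)) ?_
        have h3 : Λ z (τ y) ∈ W₂ := (hΛp z hz).1 _ hτy
        exact hW₁S ((hΛp x hx).2 _ h3)
      | zero => simp
      | add u v hu hv ihu ihv => rw [map_add]; exact Submodule.add_mem _ ihu ihv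
      | smul c u hu ihu => rw [map_smul]; exact Submodule.smul_mem _ c ihu
    rcases Submodule.mem_sup.mp hv with ⟨w, hw, s, hs, rfl⟩
    rw [map_add]
    have hw' : Λ z w ∈ S := by
      rcases (hτp ▸ hw : w ∈ Submodule.map τ p) with ⟨y, hy, rfl⟩
      exact hTS _ ⟨z, hz, y, hy, rfl⟩
    exact Submodule.add_mem _ hw' (hspan s hs)
  have hdecomp : ∀ z : g, ∃ a ∈ k, ∃ b ∈ p, z = a + b := by
    intro z
    have : z ∈ k ⊔ p := hcompl.sup_eq_top ▸ Submodule.mem_top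
    rcases Submodule.mem_sup.mp this with ⟨a, ha, b, hb, h⟩
    exact ⟨a, ha, b, hb, h.symm⟩
  constructor
  · intro z v hv
    rcases hdecomp z with ⟨a, ha, b, hb, rfl⟩
    rw [map_add]
    exact Submodule.add_mem _ (keyk a ha v hv) (keyp b hb v hv)
  · intro z
    rcases hdecomp z with ⟨a, ha, b, hb, rfl⟩
    rw [map_add, hτk a ha, zero_add]
    exact hW₁S (hτp ▸ ⟨b, hb, rfl⟩)
end

section
/- Let k ⊆ sp(p,ω) be a Lie subalgebra and R: p × p → k a k-equivariant alternating bilinear map satisfying the first Bianchi identity R(x,y)z + R(y,z)x + R(z,x)y = 0 (where k acts on p by applying endomorphisms). Then the vector space g := k ⊕ p, with bracket defined by [k₁,k₂] := [k₁,k₂]_{sp}, [k,x] := k(x) = −[x,k], and [x,y] := −R(x,y) for k, k₁, k₂ ∈ k and x, y ∈ p, is a Lie algebra (i.e., the Jacobi identity holds), and g = k ⊕ p is a symmetric pair. -/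
/-- Let `k ⊆ sp(p,ω)` be a Lie subalgebra and `R : p × p → k` a
`k`-equivariant alternating bilinear map satisfying the first Bianchi identity.  Then
`g := k ⊕ p` with bracket `[K,L] := ⁅K,L⁆`, `[K,x] := K(x) = −[x,K]`, `[x,y] := −R(x,y)`
is a Lie algebra (the bracket is closed and the Jacobi identity holds componentwise),
and `g = k ⊕ p` is a symmetric pair.  The bracket of `(K₁,x₁)` and `(K₂,x₂)` is
`(⁅K₁,K₂⁆ − R(x₁,x₂), K₁x₂ − K₂x₁)`. -/
theorem stmt16
    {p : Type*} [AddCommGroup p] [Module ℝ p] [FiniteDimensional ℝ p]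
    (ω : p →ₗ[ℝ] p →ₗ[ℝ] ℝ)
    (hωalt : ∀ v, ω v v = 0)
    (hωnd : ∀ v, (∀ w, ω v w = 0) → v = 0)
    (k : Submodule ℝ (Module.End ℝ p))
    (hksk : ∀ K ∈ k, ∀ u v, ω (K u) v + ω u (K v) = 0)
    (hkcl : ∀ K ∈ k, ∀ L ∈ k, ⁅K, L⁆ ∈ k)
    (R : p →ₗ[ℝ] p →ₗ[ℝ] Module.End ℝ p)
    (hRk : ∀ x y, R x y ∈ k)
    (hRalt : ∀ x, R x x = 0)
    (hBianchi : ∀ x y z, R x y z + R y z x + R z x y = 0)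
    (hequiv : ∀ K ∈ k, ∀ x y, ⁅K, R x y⁆ = R (K x) y + R x (K y)) :
    ∀ K₁ ∈ k, ∀ K₂ ∈ k, ∀ K₃ ∈ k, ∀ x₁ x₂ x₃ : p,
      -- the bracket is closed: its `k`-component lies in `k` (the `p`-component
      -- `K₁x₂ − K₂x₁` lies in `p` trivially), so `[k,k] ⊆ k`, `[k,p] ⊆ p`, `[p,p] ⊆ k`;
      (⁅K₁, K₂⁆ - R x₁ x₂ ∈ k) ∧
      -- `k`-component of the Jacobi identity `[[a,b],c] + [[b,c],a] + [[c,a],b] = 0`: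
      ((⁅⁅K₁, K₂⁆ - R x₁ x₂, K₃⁆ - R (K₁ x₂ - K₂ x₁) x₃)
        + (⁅⁅K₂, K₃⁆ - R x₂ x₃, K₁⁆ - R (K₂ x₃ - K₃ x₂) x₁)
        + (⁅⁅K₃, K₁⁆ - R x₃ x₁, K₂⁆ - R (K₃ x₁ - K₁ x₃) x₂) = 0) ∧
      -- `p`-component of the Jacobi identity:
      (((⁅K₁, K₂⁆ - R x₁ x₂) x₃ - K₃ (K₁ x₂ - K₂ x₁))
        + ((⁅K₂, K₃⁆ - R x₂ x₃) x₁ - K₁ (K₂ x₃ - K₃ x₂))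
        + ((⁅K₃, K₁⁆ - R x₃ x₁) x₂ - K₂ (K₃ x₁ - K₁ x₃)) = 0) := by
  intro K₁ hK₁ K₂ hK₂ K₃ hK₃ x₁ x₂ x₃
  -- antisymmetry of `R` from alternation
  have hsw : ∀ x y : p, R x y = - R y x := by
    intro x y
    have h := hRalt (x + y)
    simp only [map_add, LinearMap.add_apply, hRalt, zero_add, add_zero] at h
    exact eq_neg_of_add_eq_zero_right h
  refine ⟨sub_mem (hkcl K₁ hK₁ K₂ hK₂) (hRk x₁ x₂), ?_, ?_⟩
  · -- k-component Jacobi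
    have e1 := hequiv K₁ hK₁ x₂ x₃
    have e2 := hequiv K₂ hK₂ x₃ x₁
    have e3 := hequiv K₃ hK₃ x₁ x₂
    letI := LieRing.ofAssociativeRing (A := Module.End ℝ p)
    simp only [sub_lie, map_sub, LinearMap.sub_apply]
    rw [← lie_skew (R x₁ x₂) K₃, ← lie_skew (R x₂ x₃) K₁, ← lie_skew (R x₃ x₁) K₂,
      e3, e1, e2, hsw x₂ (K₁ x₃), hsw x₃ (K₂ x₁), hsw x₁ (K₃ x₂)]
    simp only [Ring.lie_def]
    noncomm_ring
  · -- p-component Jacobi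
    have hB := hBianchi x₁ x₂ x₃
    have hB' : R x₁ x₂ x₃ = - R x₂ x₃ x₁ - R x₃ x₁ x₂ := by
      rw [eq_sub_iff_add_eq, eq_neg_iff_add_eq_zero]
      rw [← hB]; abel
    simp only [LinearMap.sub_apply, Ring.lie_def, Module.End.mul_apply, map_sub, hB']
    abel
end
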